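/- Let k, m, n be positive integers with k < min(m, n), let P ∈ ℝ^{n×k} and Q ∈ ℝ^{m×k} both have full column rank k, let b ∈ ℝ^m, and let λ ≥ 0. Then the non-robust square-root LASSO problem min_{w ∈ ℝ^n} ‖Q Pᵀ w − b‖₂ + λ‖w‖₁ admits an optimal solution w* whose cardinality (number of nonzero entries) is at most k. -/

import Mathlib

open Matrix

/-- Euclidean norm of a vector in `ℝ^n`. -/
noncomputable def norm2 {n : ℕ} (x : Fin n → ℝ) : ℝ := Real.sqrt (∑ i, x i ^ 2)

/-- ℓ1 norm of a vector in `ℝ^n`. -/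
noncomputable def norm1 {n : ℕ} (x : Fin n → ℝ) : ℝ := ∑ i, |x i|

lemma norm2_eq_norm {d : ℕ} (x : Fin d → ℝ) :
    norm2 x = ‖(WithLp.equiv 2 (Fin d → ℝ)).symm x‖ := by
  rw [EuclideanSpace.norm_eq]
  simp [norm2, Real.norm_eq_abs, sq_abs]

lemma norm2_nonneg {d : ℕ} (x : Fin d → ℝ) : 0 ≤ norm2 x := Real.sqrt_nonneg _

lemma norm1_nonneg {d : ℕ} (x : Fin d → ℝ) : 0 ≤ norm1 x :=
  Finset.sum_nonneg fun _ _ => abs_nonneg _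

lemma norm_le_norm1 {d : ℕ} (x : Fin d → ℝ) : ‖x‖ ≤ norm1 x := by
  refine (pi_norm_le_iff_of_nonneg (norm1_nonneg x)).2 fun i => ?_
  rw [Real.norm_eq_abs]
  exact Finset.single_le_sum (fun j _ => abs_nonneg (x j)) (Finset.mem_univ i)

lemma continuous_norm1 {d : ℕ} : Continuous (norm1 : (Fin d → ℝ) → ℝ) :=
  continuous_finset_sum _ fun i _ => (continuous_apply i).abs

lemma continuous_norm2 {d : ℕ} : Continuous (norm2 : (Fin d → ℝ) → ℝ) :=
  Real.continuous_sqrt.comp (continuous_finset_sum _ fun i _ => (continuous_apply i).pow 2)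

lemma norm2_sub_le {d : ℕ} (x y : Fin d → ℝ) : norm2 x ≤ norm2 (x - y) + norm2 y := by
  rw [norm2_eq_norm, norm2_eq_norm, norm2_eq_norm]
  have h : (WithLp.equiv 2 (Fin d → ℝ)).symm x =
      (WithLp.equiv 2 (Fin d → ℝ)).symm (x - y) + (WithLp.equiv 2 (Fin d → ℝ)).symm y := by
    simp
  rw [h]
  exact norm_add_le _ _

lemma continuous_mulVec {a c : ℕ} (M : Matrix (Fin a) (Fin c) ℝ) :
    Continuous (fun v : Fin c → ℝ => M.mulVec v) := by
  have h : (fun v : Fin c → ℝ => M.mulVec v) = ⇑M.mulVecLin := by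
    funext v; rw [Matrix.mulVecLin_apply]
  rw [h]; exact M.mulVecLin.continuous_of_finiteDimensional

/-- A continuous function which is coercive on a closed set attains its minimum there. -/
lemma exists_min_closed {d : ℕ} {f : (Fin d → ℝ) → ℝ} (hf : Continuous f)
    {A : Set (Fin d → ℝ)} (hA : IsClosed A) {w₀ : Fin d → ℝ} (hw₀ : w₀ ∈ A)
    {c C : ℝ} (hc : 0 < c) (hcoer : ∀ w ∈ A, c * ‖w‖ - C ≤ f w) :
    ∃ w ∈ A, ∀ u ∈ A, f w ≤ f u := by
  set S : Set (Fin d → ℝ) := A ∩ f ⁻¹' Set.Iic (f w₀) with hS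
  have hSc : IsClosed S := hA.inter (isClosed_Iic.preimage hf)
  have hSb : Bornology.IsBounded S := by
    rw [isBounded_iff_forall_norm_le]
    refine ⟨(f w₀ + C) / c, fun x hx => ?_⟩
    have h1 := hcoer x hx.1
    have h2 : f x ≤ f w₀ := hx.2
    rw [le_div_iff₀ hc]
    nlinarith
  have hcomp := Metric.isCompact_of_isClosed_isBounded hSc hSb
  obtain ⟨x, hxS, hxmin⟩ := hcomp.exists_isMinOn ⟨w₀, hw₀, show f w₀ ≤ f w₀ from le_refl _⟩ hf.continuousOn
  refine ⟨x, hxS.1, fun u hu => ?_⟩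
  by_cases h : f u ≤ f w₀
  · exact isMinOn_iff.1 hxmin u ⟨hu, h⟩
  · exact le_trans (isMinOn_iff.1 hxmin w₀ ⟨hw₀, show f w₀ ≤ f w₀ from le_refl _⟩) (le_of_not_ge h)

lemma surj_of_rank {k n : ℕ} (P : Matrix (Fin n) (Fin k) ℝ) (hP : P.rank = k) :
    Function.Surjective (fun w : Fin n → ℝ => Pᵀ.mulVec w) := by
  have h1 : Pᵀ.rank = k := by rw [Matrix.rank_transpose]; exact hP
  have htop : LinearMap.range Pᵀ.mulVecLin = ⊤ := by
    apply Submodule.eq_top_of_finrank_eq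
    rw [Module.finrank_pi, Fintype.card_fin]
    exact h1
  intro z
  obtain ⟨w, hw⟩ := LinearMap.range_eq_top.1 htop z
  refine ⟨w, ?_⟩
  show Pᵀ.mulVec w = z
  rw [← Matrix.mulVecLin_apply]
  exact hw

lemma anti_of_rank {k m : ℕ} (Q : Matrix (Fin m) (Fin k) ℝ) (hQ : Q.rank = k) :
    ∃ K : ℝ, 0 < K ∧ ∀ z : Fin k → ℝ, ‖z‖ ≤ K * norm2 (Q.mulVec z) := by
  set e := (WithLp.linearEquiv 2 ℝ (Fin m → ℝ)).symm with he
  set f : (Fin k → ℝ) →ₗ[ℝ] EuclideanSpace ℝ (Fin m) := e.toLinearMap ∘ₗ Q.mulVecLin with hf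
  have hinj : Function.Injective Q.mulVecLin := by
    rw [← LinearMap.ker_eq_bot, ← Submodule.finrank_eq_zero (R := ℝ)]
    have h2 := LinearMap.finrank_range_add_finrank_ker Q.mulVecLin
    rw [Module.finrank_pi, Fintype.card_fin] at h2
    have h3 : Module.finrank ℝ ↥(LinearMap.range Q.mulVecLin) = k := hQ
    omega
  have hker : LinearMap.ker f = ⊥ := by
    rw [LinearMap.ker_eq_bot]
    exact e.injective.comp hinj
  obtain ⟨K, hK, hanti⟩ := LinearMap.exists_antilipschitzWith f hker
  refine ⟨K, by exact_mod_cast hK, fun z => ?_⟩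
  have h := hanti.le_mul_dist z 0
  rw [dist_eq_norm, dist_eq_norm, sub_zero, map_zero, sub_zero] at h
  have hfz : ‖f z‖ = norm2 (Q.mulVec z) := by
    rw [norm2_eq_norm]
    rfl
  rw [hfz] at h
  exact h

lemma abs_add_eq_aux {a b : ℝ} (h : |b| ≤ |a|) :
    |a + b| = |a| + (if 0 ≤ a then 1 else -1) * b := by
  rcases le_or_gt 0 a with ha | ha
  · rw [if_pos ha, one_mul, abs_of_nonneg ha, abs_of_nonneg]
    rw [abs_of_nonneg ha] at h
    have := abs_le.1 h
    linarith
  · rw [if_neg (not_le.2 ha), abs_of_neg ha, abs_of_nonpos]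
    · ring
    rw [abs_of_neg ha] at h
    have := abs_le.1 h
    linarith

/-- If the rows of `P` indexed by the support of an ℓ1-minimal solution `w` of `Pᵀ w = z`
are linearly dependent, the support can be strictly reduced keeping ℓ1-minimality. -/
lemma reduce_support {k n : ℕ} (P : Matrix (Fin n) (Fin k) ℝ) {z : Fin k → ℝ}
    {w : Fin n → ℝ} (hw : Pᵀ.mulVec w = z)
    (hmin : ∀ u, Pᵀ.mulVec u = z → norm1 w ≤ norm1 u)
    (hdep : ¬ LinearIndependent ℝ (fun i : {i : Fin n // w i ≠ 0} => P i)) :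
    ∃ w', Pᵀ.mulVec w' = z ∧ norm1 w' ≤ norm1 w ∧
      {i : Fin n | w' i ≠ 0} ⊂ {i : Fin n | w i ≠ 0} := by
  classical
  obtain ⟨g, hg0, i₁, hgi₁⟩ := Fintype.not_linearIndependent_iff.1 hdep
  set d : Fin n → ℝ := fun i => if h : w i ≠ 0 then g ⟨i, h⟩ else 0 with hd
  have hd_supp : ∀ i, w i = 0 → d i = 0 := fun i hi => by simp [hd, hi]
  have hdg : ∀ i : {i : Fin n // w i ≠ 0}, d i = g i := fun i => by
    simp [hd, i.2]
  have hdvec : Pᵀ.mulVec d = 0 := by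
    funext j
    have h0 := congrFun hg0 j
    simp only [Finset.sum_apply, Pi.smul_apply, smul_eq_mul, Pi.zero_apply] at h0
    simp only [Matrix.mulVec, dotProduct, Pi.zero_apply]
    calc ∑ i, Pᵀ j i * d i = ∑ i, d i * P i j := by
          apply Finset.sum_congr rfl; intro i _; rw [Matrix.transpose_apply]; ring
      _ = ∑ i : {i : Fin n // w i ≠ 0}, d i.1 * P i.1 j := by
          rw [← Finset.sum_subtype (Finset.univ.filter (fun i => w i ≠ 0)) (by simp)
            (fun i => d i * P i j)]
          exact (Finset.sum_subset (Finset.filter_subset _ _) (fun i _ hi => by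
            have hwi : w i = 0 := by simpa using hi
            rw [hd_supp i hwi, zero_mul])).symm
      _ = ∑ i : {i : Fin n // w i ≠ 0}, g i * P i.1 j := by
          apply Finset.sum_congr rfl; intro i _; rw [hdg]
      _ = 0 := h0
  have hd₁ : d i₁ ≠ 0 := by rw [hdg]; exact hgi₁
  set D : Finset (Fin n) := Finset.univ.filter (fun i => d i ≠ 0) with hD
  have hDne : D.Nonempty := ⟨i₁, by simp [hD, hd₁]⟩
  obtain ⟨i₀, hi₀D, hi₀min⟩ := D.exists_min_image (fun i => |w i| / |d i|) hDne
  have hd₀ : d i₀ ≠ 0 := by simpa [hD] using hi₀D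
  set t : ℝ := -(w i₀ / d i₀) with ht
  have habs_t : |t| = |w i₀| / |d i₀| := by rw [ht, abs_neg, abs_div]
  have hbound : ∀ i, |t * d i| ≤ |w i| := by
    intro i
    by_cases hdi : d i = 0
    · simp [hdi]
    · have h1 : |t| ≤ |w i| / |d i| := by
        rw [habs_t]; exact hi₀min i (by simp [hD, hdi])
      rw [abs_mul]
      calc |t| * |d i| ≤ (|w i| / |d i|) * |d i| :=
            mul_le_mul_of_nonneg_right h1 (abs_nonneg _)
        _ = |w i| := div_mul_cancel₀ _ (abs_ne_zero.2 hdi)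
  set s : Fin n → ℝ := fun i => if 0 ≤ w i then 1 else -1 with hs
  have hterm : ∀ (t' : ℝ), |t'| ≤ |t| → ∀ i, |w i + t' * d i| = |w i| + s i * (t' * d i) := by
    intro t' ht' i
    by_cases hdi : d i = 0
    · simp [hdi]
    · have hb : |t' * d i| ≤ |w i| := by
        rw [abs_mul]
        calc |t'| * |d i| ≤ |t| * |d i| := mul_le_mul_of_nonneg_right ht' (abs_nonneg _)
          _ = |t * d i| := (abs_mul _ _).symm
          _ ≤ |w i| := hbound i
      rw [abs_add_eq_aux hb, hs]
  set Cs : ℝ := ∑ i, s i * d i with hCs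
  have hnorm1 : ∀ (t' : ℝ), |t'| ≤ |t| →
      norm1 (fun i => w i + t' * d i) = norm1 w + t' * Cs := by
    intro t' ht'
    calc norm1 (fun i => w i + t' * d i)
        = ∑ i, (|w i| + t' * (s i * d i)) := by
          apply Finset.sum_congr rfl; intro i _
          rw [hterm t' ht' i]; ring
      _ = (∑ i, |w i|) + ∑ i, t' * (s i * d i) := Finset.sum_add_distrib
      _ = norm1 w + t' * Cs := by rw [norm1, hCs, Finset.mul_sum]
  have hmv : ∀ (t' : ℝ), Pᵀ.mulVec (fun i => w i + t' * d i) = z := by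
    intro t'
    have hwd : (fun i => w i + t' * d i) = w + t' • d := by
      funext i; simp [mul_comm]
    rw [hwd, Matrix.mulVec_add, Matrix.mulVec_smul, hdvec, hw]
    simp
  have h1 := hmin _ (hmv t)
  have h2 := hmin _ (hmv (-t))
  rw [hnorm1 t (le_refl _)] at h1
  rw [hnorm1 (-t) (by rw [abs_neg]), neg_mul] at h2
  have htC : t * Cs = 0 := by linarith
  refine ⟨fun i => w i + t * d i, hmv t, ?_, ?_⟩
  · rw [hnorm1 t (le_refl _), htC, add_zero]
  · rw [Set.ssubset_def]
    constructor
    · intro i hi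
      simp only [Set.mem_setOf_eq] at hi ⊢
      intro hwi
      exact hi (by rw [hwi, hd_supp i hwi]; ring)
    · intro hsub
      have hwi₀ : w i₀ ≠ 0 := fun h => hd₀ (hd_supp i₀ h)
      have hmem := hsub (show i₀ ∈ {i : Fin n | w i ≠ 0} from hwi₀)
      apply hmem
      show w i₀ + t * d i₀ = 0
      rw [ht]
      field_simp
      ring

lemma sparsify {k n : ℕ} (P : Matrix (Fin n) (Fin k) ℝ) (z : Fin k → ℝ) :
    ∀ N : ℕ, ∀ w : Fin n → ℝ, Pᵀ.mulVec w = z →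
      (∀ u, Pᵀ.mulVec u = z → norm1 w ≤ norm1 u) →
      {i : Fin n | w i ≠ 0}.ncard ≤ N →
      ∃ w', Pᵀ.mulVec w' = z ∧ norm1 w' ≤ norm1 w ∧ {i : Fin n | w' i ≠ 0}.ncard ≤ k := by
  intro N
  induction N with
  | zero =>
    intro w hw hmin hcard
    exact ⟨w, hw, le_refl _, le_trans hcard (Nat.zero_le k)⟩
  | succ N ih =>
    intro w hw hmin hcard
    by_cases hind : LinearIndependent ℝ (fun i : {i : Fin n // w i ≠ 0} => P i)
    · refine ⟨w, hw, le_refl _, ?_⟩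
      have hcardle := hind.fintype_card_le_finrank
      rw [Module.finrank_pi, Fintype.card_fin] at hcardle
      have hc : {i : Fin n | w i ≠ 0}.ncard = Fintype.card {i : Fin n // w i ≠ 0} := by
        rw [← Nat.card_coe_set_eq, Nat.card_eq_fintype_card]
        exact Fintype.card_congr (Equiv.subtypeEquivRight fun x => Iff.rfl)
      rw [hc]
      exact hcardle
    · obtain ⟨w', hw', hle, hss⟩ := reduce_support P hw hmin hind
      have hmin' : ∀ u, Pᵀ.mulVec u = z → norm1 w' ≤ norm1 u :=
        fun u hu => le_trans hle (hmin u hu)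
      have hcard' : {i : Fin n | w' i ≠ 0}.ncard ≤ N := by
        have hlt : {i : Fin n | w' i ≠ 0}.ncard < {i : Fin n | w i ≠ 0}.ncard :=
          Set.ncard_lt_ncard hss (Set.toFinite _)
        omega
      obtain ⟨w'', hA, hB, hC⟩ := ih w' hw' hmin' hcard'
      exact ⟨w'', hA, le_trans hB hle, hC⟩

/-- The non-robust square-root LASSO `min_w ‖Q Pᵀ w − b‖₂ + λ‖w‖₁` with `P`, `Q` of full
column rank `k < min(m,n)` admits an optimal solution with at most `k` nonzero entries. -/
theorem nonrobust_sqrt_lasso_sparse_solution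
    {k m n : ℕ} (hk : 0 < k) (hm : 0 < m) (hn : 0 < n) (hkmn : k < min m n)
    (P : Matrix (Fin n) (Fin k) ℝ) (Q : Matrix (Fin m) (Fin k) ℝ)
    (hP : P.rank = k) (hQ : Q.rank = k)
    (b : Fin m → ℝ) (lam : ℝ) (hlam : 0 ≤ lam) :
    ∃ w : Fin n → ℝ,
      (∀ w' : Fin n → ℝ,
        norm2 ((Q * Pᵀ).mulVec w - b) + lam * norm1 w ≤
          norm2 ((Q * Pᵀ).mulVec w' - b) + lam * norm1 w') ∧
      {i : Fin n | w i ≠ 0}.ncard ≤ k := by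
  classical
  obtain ⟨wb, hwb⟩ : ∃ wb : Fin n → ℝ, ∀ w' : Fin n → ℝ,
      norm2 ((Q * Pᵀ).mulVec wb - b) + lam * norm1 wb ≤
        norm2 ((Q * Pᵀ).mulVec w' - b) + lam * norm1 w' := by
    rcases eq_or_lt_of_le hlam with rfl | hlam0
    · -- lam = 0
      obtain ⟨K, hK, hKle⟩ := anti_of_rank Q hQ
      have hgcont : Continuous (fun zv : Fin k → ℝ => norm2 (Q.mulVec zv - b)) :=
        continuous_norm2.comp ((continuous_mulVec Q).sub continuous_const)
      have hcoer : ∀ zv ∈ (Set.univ : Set (Fin k → ℝ)),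
          (1 / K) * ‖zv‖ - norm2 b ≤ norm2 (Q.mulVec zv - b) := by
        intro zv _
        have h2 := norm2_sub_le (Q.mulVec zv) b
        have h3 : ‖zv‖ ≤ K * (norm2 (Q.mulVec zv - b) + norm2 b) :=
          le_trans (hKle zv) (mul_le_mul_of_nonneg_left h2 hK.le)
        have h4 : (1 / K) * ‖zv‖ ≤ (1 / K) * (K * (norm2 (Q.mulVec zv - b) + norm2 b)) :=
          mul_le_mul_of_nonneg_left h3 (by positivity)
        rw [← mul_assoc, one_div_mul_cancel hK.ne', one_mul] at h4
        linarith
      obtain ⟨zs, _, hzs⟩ := exists_min_closed hgcont isClosed_univ (Set.mem_univ 0)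
        (by positivity : (0:ℝ) < 1 / K) hcoer
      obtain ⟨wb, hwbz⟩ := surj_of_rank P hP zs
      have hwbz' : Pᵀ.mulVec wb = zs := hwbz
      refine ⟨wb, fun w' => ?_⟩
      rw [← Matrix.mulVec_mulVec, ← Matrix.mulVec_mulVec, hwbz']
      simp only [zero_mul, add_zero]
      exact hzs _ (Set.mem_univ _)
    · -- lam > 0
      have hFcont : Continuous (fun w : Fin n → ℝ =>
          norm2 ((Q * Pᵀ).mulVec w - b) + lam * norm1 w) :=
        (continuous_norm2.comp ((continuous_mulVec (Q * Pᵀ)).sub continuous_const)).add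
          (continuous_const.mul continuous_norm1)
      have hcoer : ∀ w ∈ (Set.univ : Set (Fin n → ℝ)),
          lam * ‖w‖ - 0 ≤ norm2 ((Q * Pᵀ).mulVec w - b) + lam * norm1 w := by
        intro w _
        have h1 : lam * ‖w‖ ≤ lam * norm1 w :=
          mul_le_mul_of_nonneg_left (norm_le_norm1 w) hlam0.le
        have h2 := norm2_nonneg ((Q * Pᵀ).mulVec w - b)
        linarith
      obtain ⟨wb, _, hwb⟩ := exists_min_closed hFcont isClosed_univ (Set.mem_univ 0)
        hlam0 hcoer
      exact ⟨wb, fun w' => hwb w' (Set.mem_univ _)⟩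
  set z := Pᵀ.mulVec wb with hz
  have hAclosed : IsClosed {w : Fin n → ℝ | Pᵀ.mulVec w = z} :=
    isClosed_eq (continuous_mulVec Pᵀ) continuous_const
  obtain ⟨u₀, hu₀A, hu₀min⟩ := exists_min_closed (C := 0) continuous_norm1 hAclosed
    (show Pᵀ.mulVec wb = z from hz.symm) one_pos
    (fun w _ => by simpa using norm_le_norm1 w)
  obtain ⟨ws, hws, hwsle, hwscard⟩ := sparsify P z ({i : Fin n | u₀ i ≠ 0}.ncard) u₀ hu₀A
    (fun u hu => hu₀min u hu) le_rfl
  refine ⟨ws, fun w' => ?_, hwscard⟩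
  have hnorm1le : norm1 ws ≤ norm1 wb := le_trans hwsle (hu₀min wb hz.symm)
  have heq : (Q * Pᵀ).mulVec ws = (Q * Pᵀ).mulVec wb := by
    rw [← Matrix.mulVec_mulVec, ← Matrix.mulVec_mulVec, hws]
  calc norm2 ((Q * Pᵀ).mulVec ws - b) + lam * norm1 ws
      ≤ norm2 ((Q * Pᵀ).mulVec wb - b) + lam * norm1 wb := by
        rw [heq]
        exact add_le_add le_rfl (mul_le_mul_of_nonneg_left hnorm1le hlam)
    _ ≤ _ := hwb w'
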